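/- Suppose the distribution function F of ε satisfies |F(u) - F(0) - u f(0)| ≤ c₂ u² for all |u| ≤ c₁, where f(0) > 0, and P(ε ≤ 0) = τ. Then for any a with 0 ≤ a ≤ c₁, E[ρ_τ(ε - a) - ρ_τ(ε)] ≥ (1/2) f(0) a² - (c₂/3) a³. In particular, the expected quantile loss increment is bounded below by a quadratic minus a cubic remainder. -/

import Mathlib

open MeasureTheory

noncomputable def rho (τ u : ℝ) : ℝ := u * (τ - if u ≤ 0 then 1 else 0)

lemma rho_diff_eq (τ a x : ℝ) (ha : 0 ≤ a) :
    rho τ (x - a) - rho τ x = min a (max (a - x) 0) - a * τ := by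
  unfold rho
  rcases le_or_gt x 0 with h1 | h1
  · rw [if_pos (by linarith : x - a ≤ 0), if_pos h1,
      max_eq_left (by linarith), min_eq_left (by linarith)]
    ring
  · rcases le_or_gt x a with h2 | h2
    · rw [if_pos (by linarith : x - a ≤ 0), if_neg (not_le.mpr h1),
        max_eq_left (by linarith), min_eq_right (by linarith)]
      ring
    · rw [if_neg (by push_neg; linarith : ¬ x - a ≤ 0), if_neg (not_le.mpr h1),
        max_eq_right (by linarith), min_eq_right ha]
      ring

lemma g_eq (μ' : Measure ℝ) (a x : ℝ) (ha : 0 ≤ a) (hμ' : μ' = volume) :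
    min a (max (a - x) 0) = ∫ s in Set.Ioc (0:ℝ) a, (if x ≤ s then (1:ℝ) else 0) := by
  subst hμ'
  have hrw : (fun s : ℝ => if x ≤ s then (1:ℝ) else 0)
      = Set.indicator (Set.Ici x) (fun _ => (1:ℝ)) := by
    funext s; simp [Set.indicator_apply, Set.mem_Ici]
  rw [hrw, integral_indicator measurableSet_Ici, Measure.restrict_restrict measurableSet_Ici,
    setIntegral_const]
  rcases le_or_gt x 0 with h1 | h1
  · have hs : Set.Ici x ∩ Set.Ioc 0 a = Set.Ioc 0 a := by
      apply Set.inter_eq_self_of_subset_right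
      intro s hs; exact le_trans h1 (le_of_lt hs.1)
    rw [hs, max_eq_left (by linarith), min_eq_left (by linarith)]
    simp [Real.volume_Ioc, ENNReal.toReal_ofReal ha]
    exact ha
  · rcases le_or_gt x a with h2 | h2
    · have hs : Set.Ici x ∩ Set.Ioc 0 a = Set.Icc x a := by
        ext s
        simp only [Set.mem_inter_iff, Set.mem_Ici, Set.mem_Ioc, Set.mem_Icc]
        constructor
        · rintro ⟨hx, _, hsa⟩; exact ⟨hx, hsa⟩
        · rintro ⟨hx, hsa⟩; exact ⟨hx, lt_of_lt_of_le h1 hx, hsa⟩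
      rw [hs, max_eq_left (by linarith), min_eq_right (by linarith)]
      simp [Real.volume_Icc, ENNReal.toReal_ofReal (by linarith : (0:ℝ) ≤ a - x)]
      exact h2
    · have hs : Set.Ici x ∩ Set.Ioc 0 a = ∅ := by
        ext s
        simp only [Set.mem_inter_iff, Set.mem_Ici, Set.mem_Ioc, Set.mem_empty_iff_false,
          iff_false, not_and]
        intro hx h0 hsa
        linarith
      rw [hs, max_eq_right (by linarith), min_eq_right ha]
      simp

theorem expected_rho_increment_lower_bound (τ : ℝ) (hτ : τ ∈ Set.Ioo (0:ℝ) 1)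
    (μ : Measure ℝ) [IsProbabilityMeasure μ]
    (hint : Integrable (fun x : ℝ => x) μ)
    (F : ℝ → ℝ) (hF : ∀ t, F t = (μ (Set.Iic t)).toReal) (hF0 : F 0 = τ)
    (c₁ c₂ f0 : ℝ) (hc₁ : 0 < c₁) (hc₂ : 0 < c₂) (hf0 : 0 < f0)
    (happrox : ∀ u : ℝ, |u| ≤ c₁ → |F u - F 0 - u * f0| ≤ c₂ * u ^ 2)
    (a : ℝ) (ha0 : 0 ≤ a) (ha1 : a ≤ c₁) :
    (1 / 2) * f0 * a ^ 2 - (c₂ / 3) * a ^ 3 ≤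
      ∫ x, (rho τ (x - a) - rho τ x) ∂μ := by
  obtain ⟨hτ0, hτ1⟩ := hτ
  set g : ℝ → ℝ := fun x => min a (max (a - x) 0) with hg_def
  have hg_cont : Continuous g :=
    continuous_const.min ((continuous_const.sub continuous_id).max continuous_const)
  have hg_bdd : ∀ x, ‖g x‖ ≤ a := by
    intro x
    rw [Real.norm_eq_abs, abs_le]
    constructor
    · have : (0:ℝ) ≤ min a (max (a - x) 0) := le_min ha0 (le_max_right _ _)
      linarith
    · exact min_le_left _ _
  have hg_int : Integrable g μ :=
    Integrable.mono' (integrable_const a) hg_cont.aestronglyMeasurable (ae_of_all _ hg_bdd)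
  -- rewrite the integrand
  have hstep1 : ∫ x, (rho τ (x - a) - rho τ x) ∂μ = (∫ x, g x ∂μ) - a * τ := by
    have : (fun x => rho τ (x - a) - rho τ x) = fun x => g x - a * τ := by
      funext x; exact rho_diff_eq τ a x ha0
    rw [this, integral_sub hg_int (integrable_const _), integral_const]
    simp
  -- Fubini
  set ν : Measure ℝ := volume.restrict (Set.Ioc (0:ℝ) a) with hν
  haveI : IsFiniteMeasure ν := by
    constructor
    rw [hν, Measure.restrict_apply_univ, Real.volume_Ioc]
    exact ENNReal.ofReal_lt_top
  have hswap : ∫ x, g x ∂μ = ∫ s in Set.Ioc (0:ℝ) a, F s := by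
    set f : ℝ → ℝ → ℝ := fun x s => if x ≤ s then (1:ℝ) else 0 with hf_def
    have hunc : Integrable (Function.uncurry f) (μ.prod ν) := by
      have heq : Function.uncurry f
          = Set.indicator {p : ℝ × ℝ | p.1 ≤ p.2} (fun _ => (1:ℝ)) := by
        funext p; simp [Function.uncurry, hf_def, Set.indicator_apply]
      rw [heq]
      exact (integrable_const 1).indicator (measurableSet_le measurable_fst measurable_snd)
    have h1 : ∫ x, g x ∂μ = ∫ x, ∫ s, f x s ∂ν ∂μ := by
      apply integral_congr_ae; filter_upwards with x
      exact g_eq volume a x ha0 rfl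
    have h2 : ∀ s : ℝ, ∫ x, f x s ∂μ = F s := by
      intro s
      have : (fun x => f x s) = Set.indicator (Set.Iic s) (fun _ => (1:ℝ)) := by
        funext x; simp [hf_def, Set.indicator_apply, Set.mem_Iic]
      rw [this, integral_indicator_const _ measurableSet_Iic, hF s, smul_eq_mul, mul_one]
      rfl
    rw [h1, integral_integral_swap hunc]
    exact integral_congr_ae (ae_of_all _ fun s => h2 s)
  -- monotonicity of F and integrability
  have hFmono : Monotone F := by
    intro s t hst
    rw [hF s, hF t]
    exact ENNReal.toReal_mono (measure_ne_top μ _) (measure_mono (Set.Iic_subset_Iic.mpr hst))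
  have hFint : IntegrableOn F (Set.Ioc 0 a) volume := by
    apply IntegrableOn.mono_set _ Set.Ioc_subset_Icc_self
    exact (hFmono.monotoneOn _).integrableOn_isCompact isCompact_Icc
  -- lower bound F on the interval
  have hFlb : ∀ s ∈ Set.Ioc (0:ℝ) a, τ + f0 * s - c₂ * s ^ 2 ≤ F s := by
    intro s hs
    have h := happrox s (by rw [abs_of_nonneg (le_of_lt hs.1)]; linarith [hs.2])
    rw [hF0] at h
    have := abs_le.mp h
    nlinarith [this.1]
  have hpoly_int : IntegrableOn (fun s => τ + f0 * s - c₂ * s ^ 2) (Set.Ioc 0 a) volume := by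
    exact Continuous.integrableOn_Ioc (by fun_prop)
  have hmono_int : ∫ s in Set.Ioc (0:ℝ) a, (τ + f0 * s - c₂ * s ^ 2)
      ≤ ∫ s in Set.Ioc (0:ℝ) a, F s :=
    setIntegral_mono_on hpoly_int hFint measurableSet_Ioc hFlb
  -- compute the polynomial integral
  have hcomp : ∫ s in Set.Ioc (0:ℝ) a, (τ + f0 * s - c₂ * s ^ 2)
      = τ * a + f0 / 2 * a ^ 2 - c₂ / 3 * a ^ 3 := by
    rw [← intervalIntegral.integral_of_le ha0]
    have hd : ∀ s ∈ Set.uIcc (0:ℝ) a,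
        HasDerivAt (fun t => τ * t + f0 / 2 * t ^ 2 - c₂ / 3 * t ^ 3)
          (τ + f0 * s - c₂ * s ^ 2) s := by
      intro s _
      have h := (((hasDerivAt_id s).const_mul τ).add
        ((hasDerivAt_pow 2 s).const_mul (f0 / 2))).sub
        ((hasDerivAt_pow 3 s).const_mul (c₂ / 3))
      refine h.congr_deriv ?_
      ring
    rw [intervalIntegral.integral_eq_sub_of_hasDerivAt hd
      ((by fun_prop : Continuous fun s : ℝ => τ + f0 * s - c₂ * s ^ 2).intervalIntegrable _ _)]
    ring
  rw [hstep1, hswap]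
  nlinarith [hmono_int, hcomp]
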